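/- Assume {y_k}_{k=1}^m strictly interlaces {x_j}_{j=1}^n. Then there exist real numbers ω_1,…,ω_n with ω_j > 0 for every j such that ∑_{j=1}^n ω_j P_m(x_j) x_j^k = 0 for every k = 0,…,m−1. -/
import Mathlib

open Finset Polynomial

/-- `Pm m y` is the monic polynomial `P_m(t) = ∏_{k=1}^m (t - y_k)` (1-based indexing). -/
noncomputable def Pm (m : ℕ) (y : ℕ → ℝ) (t : ℝ) : ℝ := ∏ k ∈ Finset.Icc 1 m, (t - y k)

/-- `{y_k}_{k=1}^m` strictly interlaces `{x_j}_{j=1}^n`: there are integers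
`0 = i_0 < i_1 < ⋯ < i_m < i_{m+1} = n` with `x_{i_k} < y_k < x_{i_k + 1}` for `k = 1,…,m`
(1-based indexing of the sequences `x`, `y`). -/
def StrictlyInterlacesR (n m : ℕ) (x y : ℕ → ℝ) : Prop :=
  ∃ i : ℕ → ℕ, i 0 = 0 ∧ i (m + 1) = n ∧ (∀ r, r ≤ m → i r < i (r + 1)) ∧
    ∀ k, 1 ≤ k → k ≤ m → x (i k) < y k ∧ y k < x (i k + 1)

lemma sign_prod_split {f : ℕ → ℝ} {A B : Finset ℕ} (hd : Disjoint A B)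
    (hA : ∀ a ∈ A, 0 < f a) (hB : ∀ b ∈ B, f b < 0) :
    0 < (-1 : ℝ) ^ B.card * ∏ i ∈ A ∪ B, f i := by
  rw [prod_union hd]
  have hB' : ∏ i ∈ B, (-(f i)) = (-1 : ℝ) ^ B.card * ∏ i ∈ B, f i := by
    rw [← prod_const, ← prod_mul_distrib]; simp
  have hpos : 0 < (∏ i ∈ A, f i) * ∏ i ∈ B, (-(f i)) :=
    mul_pos (prod_pos hA) (prod_pos fun b hb => neg_pos.2 (hB b hb))
  rw [hB', mul_left_comm] at hpos
  exact hpos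

lemma inv_sign' {e : ℕ} {a : ℝ} (h : 0 < (-1 : ℝ) ^ e * a) : 0 < (-1 : ℝ) ^ e * a⁻¹ := by
  have h1 : ((-1 : ℝ) ^ e)⁻¹ = (-1 : ℝ) ^ e := by rw [← inv_pow, inv_neg, inv_one]
  have h2 : (-1 : ℝ) ^ e * a⁻¹ = ((-1 : ℝ) ^ e * a)⁻¹ := by rw [mul_inv, h1]
  rw [h2]; exact inv_pos.2 h

lemma basis_coeff {m : ℕ} (z : ℕ → ℝ) (hz : Set.InjOn z (Finset.range (m+1))) {k : ℕ}
    (hk : k ∈ Finset.range (m+1)) :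
    (Lagrange.basis (Finset.range (m+1)) z k).coeff m
      = ∏ s ∈ (Finset.range (m+1)).erase k, (z k - z s)⁻¹ := by
  have hnd : (Lagrange.basis (Finset.range (m+1)) z k).natDegree = m := by
    rw [Lagrange.natDegree_basis hz hk, card_range]; omega
  have hlc : (Lagrange.basis (Finset.range (m+1)) z k).coeff m
      = (Lagrange.basis (Finset.range (m+1)) z k).leadingCoeff := by
    rw [leadingCoeff, hnd]
  rw [hlc, Lagrange.basis, leadingCoeff_prod]
  refine prod_congr rfl fun s hs => ?_
  have hne : z k ≠ z s := by
    intro h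
    exact (mem_erase.mp hs).1 (hz (mem_of_mem_erase hs) hk (h.symm))
  rw [Lagrange.basisDivisor, leadingCoeff_mul, leadingCoeff_C,
    (monic_X_sub_C (z s)).leadingCoeff, mul_one]

lemma dd {m : ℕ} (z : ℕ → ℝ) (hz : Set.InjOn z (Finset.range (m+1))) {p : ℕ} (hp : p < m) :
    ∑ k ∈ Finset.range (m+1), (∏ s ∈ (Finset.range (m+1)).erase k, (z k - z s))⁻¹ * z k ^ p
      = 0 := by
  have hdeg : (X ^ p : ℝ[X]).degree < (Finset.range (m+1)).card := by
    rw [degree_X_pow, card_range]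
    exact_mod_cast Nat.lt_succ_of_lt hp
  have hEq := Lagrange.eq_interpolate hz hdeg
  have h0 : ((X ^ p : ℝ[X]).coeff m) = 0 := by
    rw [coeff_X_pow]; exact if_neg (by omega)
  rw [hEq] at h0
  rw [Lagrange.interpolate_apply, finset_sum_coeff] at h0
  rw [← h0]
  refine Finset.sum_congr rfl fun k hk => ?_
  rw [coeff_C_mul, basis_coeff z hz hk, eval_pow, eval_X]
  rw [← prod_inv_distrib]
  ring

/-- if `{y_k}` strictly interlaces `{x_j}`, then there exist strictly positive
weights `ω_1,…,ω_n` with `∑_j ω_j P_m(x_j) x_j^k = 0` for every `k = 0,…,m-1`. -/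
theorem stmt_6 (m n : ℕ) (hm : 1 ≤ m) (hmn : m < n)
    (x y : ℕ → ℝ)
    (hx : ∀ j j', 1 ≤ j → j < j' → j' ≤ n → x j < x j')
    (hy : ∀ k k', 1 ≤ k → k < k' → k' ≤ m → y k < y k')
    (hxy : ∀ j k, 1 ≤ j → j ≤ n → 1 ≤ k → k ≤ m → x j ≠ y k)
    (hint : StrictlyInterlacesR n m x y) :
    ∃ ω : Fin n → ℝ, (∀ j, 0 < ω j) ∧
      ∀ k, k < m →
        ∑ j : Fin n, ω j * Pm m y (x ((j : ℕ) + 1)) * x ((j : ℕ) + 1) ^ k = 0 := by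
  classical
  obtain ⟨i, hi0, hiN, hinc, hib⟩ := hint
  have istrict : ∀ r s : ℕ, r < s → s ≤ m + 1 → i r < i s := by
    intro r s hrs hs
    induction s with
    | zero => omega
    | succ t ih =>
      rcases Nat.lt_succ_iff_lt_or_eq.mp hrs with h | h
      · exact lt_trans (ih h (by omega)) (hinc t (by omega))
      · subst h; exact hinc r (by omega)
  have imono : ∀ r s, r ≤ s → s ≤ m + 1 → i r ≤ i s := by
    intro r s h hs
    rcases h.lt_or_eq with h' | h'
    · exact (istrict r s h' hs).le
    · rw [h']
  have iun : ∀ r, r ≤ m + 1 → i r ≤ n := fun r hr => by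
    rw [← hiN]; exact imono r (m+1) hr le_rfl
  have xmono : ∀ a b, 1 ≤ a → a ≤ b → b ≤ n → x a ≤ x b := by
    intro a b h1 h2 h3
    rcases h2.lt_or_eq with h | h
    · exact (hx a b h1 h h3).le
    · rw [h]
  set K : ℕ → ℕ := fun j => Nat.findGreatest (fun k => i k < j) m with hKdef
  have hKspec : ∀ j, 1 ≤ j → j ≤ n → K j ≤ m ∧ i (K j) < j ∧ j ≤ i (K j + 1) := by
    intro j h1 h2
    have hle : K j ≤ m := Nat.findGreatest_le m
    have hsp : i (K j) < j :=
      Nat.findGreatest_spec (P := fun k => i k < j) (Nat.zero_le m)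
        (show i 0 < j by rw [hi0]; omega)
    have hup : j ≤ i (K j + 1) := by
      by_cases hKm : K j = m
      · rw [hKm, hiN]; exact h2
      · have h' : K j + 1 ≤ m := by omega
        have := Nat.findGreatest_is_greatest (P := fun k => i k < j)
          (Nat.lt_succ_self (K j)) h'
        simp only [Nat.succ_eq_add_one] at this
        omega
    exact ⟨hle, hsp, hup⟩
  have hPm : ∀ k j, k ≤ m → i k < j → j ≤ i (k+1) →
      0 < (-1 : ℝ) ^ (m - k) * Pm m y (x j) := by
    intro k j hk hj1 hj2
    have hjn : j ≤ n := le_trans hj2 (iun (k+1) (by omega))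
    have hsplit : Finset.Icc 1 m = Finset.Icc 1 k ∪ Finset.Icc (k+1) m := by
      ext r; simp only [Finset.mem_Icc, Finset.mem_union]; omega
    have hdisj : Disjoint (Finset.Icc 1 k) (Finset.Icc (k+1) m) := by
      rw [Finset.disjoint_left]; intro a ha hb
      simp only [Finset.mem_Icc] at ha hb; omega
    have hcard : (Finset.Icc (k+1) m).card = m - k := by rw [Nat.card_Icc]; omega
    rw [Pm, hsplit, ← hcard]
    apply sign_prod_split hdisj
    · intro r hr
      rw [Finset.mem_Icc] at hr
      have h1 : y r < x (i r + 1) := (hib r hr.1 (le_trans hr.2 hk)).2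
      have hirj : i r < j := lt_of_le_of_lt (imono r k hr.2 (by omega)) hj1
      have h2 : x (i r + 1) ≤ x j := xmono _ _ (by omega) (by omega) hjn
      linarith
    · intro r hr
      rw [Finset.mem_Icc] at hr
      have h1 : x (i r) < y r := (hib r (by omega) hr.2).1
      have h2 : x j ≤ x (i (k+1)) := xmono j (i (k+1)) (by omega) hj2 (iun (k+1) (by omega))
      have hk1pos : 1 ≤ i (k+1) := by
        have := istrict 0 (k+1) (by omega) (by omega); omega
      have h3 : x (i (k+1)) ≤ x (i r) :=
        xmono (i (k+1)) (i r) hk1pos (imono (k+1) r hr.1 (by omega)) (iun r (by omega))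
      linarith
  set c : ℕ → ℕ → ℕ := fun j s => if s = K j then j else i s + 1 with hcdef
  have hc : ∀ j, 1 ≤ j → j ≤ n → ∀ s, s ≤ m → i s < c j s ∧ c j s ≤ i (s+1) := by
    intro j h1 h2 s hs
    obtain ⟨hKle, hKlt, hKup⟩ := hKspec j h1 h2
    by_cases h : s = K j
    · simp only [hcdef, if_pos h]; rw [h]; exact ⟨hKlt, hKup⟩
    · simp only [hcdef, if_neg h]; exact ⟨Nat.lt_succ_self _, hinc s hs⟩
  have hcn : ∀ j, 1 ≤ j → j ≤ n → ∀ s, s ≤ m → 1 ≤ c j s ∧ c j s ≤ n := by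
    intro j h1 h2 s hs
    obtain ⟨ha, hb⟩ := hc j h1 h2 s hs
    exact ⟨by omega, le_trans hb (iun (s+1) (by omega))⟩
  have hzmono : ∀ j, 1 ≤ j → j ≤ n → ∀ s t, s < t → t ≤ m → x (c j s) < x (c j t) := by
    intro j h1 h2 s t hst ht
    have hs := hc j h1 h2 s (by omega)
    have ht' := hc j h1 h2 t ht
    have hle : c j s ≤ i t := le_trans hs.2 (imono (s+1) t hst (by omega))
    have htlt : i t < c j t := ht'.1
    exact hx (c j s) (c j t) (by omega) (by omega) (le_trans ht'.2 (iun (t+1) (by omega)))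
  have hzinj : ∀ j, 1 ≤ j → j ≤ n → Set.InjOn (fun s => x (c j s)) (Finset.range (m+1)) := by
    intro j h1 h2 s hs t ht heq
    simp only [Finset.coe_range, Set.mem_Iio] at hs ht
    by_contra hne
    rcases Nat.lt_or_ge s t with h | h
    · exact absurd heq (ne_of_lt (hzmono j h1 h2 s t h (by omega)))
    · have h' : t < s := by omega
      exact absurd heq.symm (ne_of_lt (hzmono j h1 h2 t s h' (by omega)))
  set L : ℕ → ℕ → ℝ :=
    fun j k => (∏ s ∈ (Finset.range (m+1)).erase k, (x (c j k) - x (c j s)))⁻¹ with hLdef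
  have hL : ∀ j, 1 ≤ j → j ≤ n → ∀ k, k ≤ m → 0 < (-1 : ℝ) ^ (m - k) * L j k := by
    intro j h1 h2 k hk
    apply inv_sign'
    have hsplit : (Finset.range (m+1)).erase k = Finset.range k ∪ Finset.Ico (k+1) (m+1) := by
      ext s
      simp only [Finset.mem_erase, Finset.mem_range, Finset.mem_union, Finset.mem_Ico]; omega
    have hdisj : Disjoint (Finset.range k) (Finset.Ico (k+1) (m+1)) := by
      rw [Finset.disjoint_left]; intro a ha hb
      simp only [Finset.mem_range] at ha; simp only [Finset.mem_Ico] at hb; omega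
    have hcard : (Finset.Ico (k+1) (m+1)).card = m - k := by rw [Nat.card_Ico]; omega
    rw [hsplit, ← hcard]
    apply sign_prod_split hdisj
    · intro s hs
      rw [Finset.mem_range] at hs
      exact sub_pos.2 (hzmono j h1 h2 s k hs hk)
    · intro s hs
      rw [Finset.mem_Ico] at hs
      exact sub_neg.2 (hzmono j h1 h2 k s (by omega) (by omega))
  have hPmne : ∀ j, 1 ≤ j → j ≤ n → ∀ k, k ≤ m → Pm m y (x (c j k)) ≠ 0 := by
    intro j h1 h2 k hk h0
    have hck := hc j h1 h2 k hk
    have := hPm k (c j k) hk hck.1 hck.2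
    rw [h0, mul_zero] at this; exact lt_irrefl 0 this
  have hQ : ∀ j, 1 ≤ j → j ≤ n → ∀ k, k ≤ m → 0 < L j k / Pm m y (x (c j k)) := by
    intro j h1 h2 k hk
    have h1' := hL j h1 h2 k hk
    have hck := hc j h1 h2 k hk
    have h2' := hPm k (c j k) hk hck.1 hck.2
    have e : L j k / Pm m y (x (c j k))
        = ((-1 : ℝ) ^ (m-k) * L j k) / ((-1 : ℝ) ^ (m-k) * Pm m y (x (c j k))) :=
      (mul_div_mul_left _ _ (pow_ne_zero _ (by norm_num))).symm
    rw [e]; exact div_pos h1' h2'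
  refine ⟨fun t => ∑ j ∈ Finset.Icc 1 n, ∑ k ∈ Finset.range (m+1),
      if c j k = (t : ℕ) + 1 then L j k / Pm m y (x (c j k)) else 0, ?_, ?_⟩
  · intro t
    have ht1 : 1 ≤ (t : ℕ) + 1 := by omega
    have ht2 : (t : ℕ) + 1 ≤ n := t.isLt
    have hnonneg : ∀ j ∈ Finset.Icc 1 n,
        0 ≤ ∑ k ∈ Finset.range (m+1),
          if c j k = (t : ℕ) + 1 then L j k / Pm m y (x (c j k)) else 0 := by
      intro j hj
      rw [Finset.mem_Icc] at hj
      refine Finset.sum_nonneg fun k hk => ?_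
      rw [Finset.mem_range] at hk
      split
      · exact (hQ j hj.1 hj.2 k (by omega)).le
      · exact le_rfl
    refine Finset.sum_pos' hnonneg ⟨(t : ℕ) + 1, Finset.mem_Icc.2 ⟨ht1, ht2⟩, ?_⟩
    obtain ⟨hKle, hKlt, hKup⟩ := hKspec ((t : ℕ) + 1) ht1 ht2
    have hnonneg2 : ∀ k ∈ Finset.range (m+1),
        0 ≤ if c ((t : ℕ) + 1) k = (t : ℕ) + 1
          then L ((t : ℕ) + 1) k / Pm m y (x (c ((t : ℕ) + 1) k)) else 0 := by
      intro k hk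
      rw [Finset.mem_range] at hk
      split
      · exact (hQ ((t : ℕ) + 1) ht1 ht2 k (by omega)).le
      · exact le_rfl
    refine Finset.sum_pos' hnonneg2 ⟨K ((t : ℕ) + 1), Finset.mem_range.2 (by omega), ?_⟩
    have hcK : c ((t : ℕ) + 1) (K ((t : ℕ) + 1)) = (t : ℕ) + 1 := by
      simp only [hcdef, if_pos rfl]
    rw [if_pos hcK]
    exact hQ ((t : ℕ) + 1) ht1 ht2 (K ((t : ℕ) + 1)) hKle
  · intro p hp
    have step1 : ∀ t : Fin n,
        (∑ j ∈ Finset.Icc 1 n, ∑ k ∈ Finset.range (m+1),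
          if c j k = (t : ℕ) + 1 then L j k / Pm m y (x (c j k)) else 0)
          * Pm m y (x ((t : ℕ) + 1)) * x ((t : ℕ) + 1) ^ p
        = ∑ j ∈ Finset.Icc 1 n, ∑ k ∈ Finset.range (m+1),
          (if c j k = (t : ℕ) + 1 then
            L j k / Pm m y (x (c j k)) * Pm m y (x ((t : ℕ) + 1)) * x ((t : ℕ) + 1) ^ p
           else 0) := by
      intro t
      simp only [Finset.sum_mul, ite_mul, zero_mul]
    calc ∑ t : Fin n, (∑ j ∈ Finset.Icc 1 n, ∑ k ∈ Finset.range (m+1),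
          if c j k = (t : ℕ) + 1 then L j k / Pm m y (x (c j k)) else 0)
          * Pm m y (x ((t : ℕ) + 1)) * x ((t : ℕ) + 1) ^ p
        = ∑ t : Fin n, ∑ j ∈ Finset.Icc 1 n, ∑ k ∈ Finset.range (m+1),
          (if c j k = (t : ℕ) + 1 then
            L j k / Pm m y (x (c j k)) * Pm m y (x ((t : ℕ) + 1)) * x ((t : ℕ) + 1) ^ p
           else 0) := Finset.sum_congr rfl fun t _ => step1 t
      _ = ∑ j ∈ Finset.Icc 1 n, ∑ t : Fin n, ∑ k ∈ Finset.range (m+1),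
          (if c j k = (t : ℕ) + 1 then
            L j k / Pm m y (x (c j k)) * Pm m y (x ((t : ℕ) + 1)) * x ((t : ℕ) + 1) ^ p
           else 0) := Finset.sum_comm
      _ = ∑ j ∈ Finset.Icc 1 n, ∑ k ∈ Finset.range (m+1), ∑ t : Fin n,
          (if c j k = (t : ℕ) + 1 then
            L j k / Pm m y (x (c j k)) * Pm m y (x ((t : ℕ) + 1)) * x ((t : ℕ) + 1) ^ p
           else 0) := Finset.sum_congr rfl fun j _ => Finset.sum_comm
      _ = ∑ j ∈ Finset.Icc 1 n, ∑ k ∈ Finset.range (m+1), L j k * x (c j k) ^ p := ?_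
      _ = 0 := by
          refine Finset.sum_eq_zero fun j hj => ?_
          rw [Finset.mem_Icc] at hj
          exact dd (fun s => x (c j s)) (hzinj j hj.1 hj.2) hp
    refine Finset.sum_congr rfl fun j hj => ?_
    rw [Finset.mem_Icc] at hj
    refine Finset.sum_congr rfl fun k hk => ?_
    rw [Finset.mem_range] at hk
    have hck := hcn j hj.1 hj.2 k (by omega)
    have ht0 : c j k - 1 < n := by omega
    rw [Finset.sum_eq_single_of_mem (⟨c j k - 1, ht0⟩ : Fin n) (Finset.mem_univ _)]
    · have hval : c j k = ((⟨c j k - 1, ht0⟩ : Fin n) : ℕ) + 1 := by simp; omega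
      rw [if_pos hval, ← hval]
      rw [div_mul_cancel₀ _ (hPmne j hj.1 hj.2 k (by omega))]
    · intro t _ htne
      rw [if_neg]
      intro hcontra
      apply htne
      apply Fin.ext
      simp only []
      omega
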